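/- arXiv:2103.03540 — 2 statements merged into one kernel-verified Lean document; each statement's English description precedes it below -/
import Mathlib

section
/- Let m ≥ 1 and fix an index i with 1 ≤ i < m. Let X_i be the set of vectors x = (x_1,...,x_m) over the alphabet {0,1,2,3} such that x_i ≠ x_{i+1}. Then any finite concatenation of vectors from X_i has maximum run-length at most m (no m+1 consecutive equal symbols). -/
lemma flat_len (m : ℕ) (L : List (Fin m → Fin 4)) :
    ((L.map (fun v => List.ofFn v)).flatten).length = L.length * m := by
  induction L with
  | nil => simp
  | cons v L ih => simp [ih]; ring

lemma flat_get (m : ℕ) (L : List (Fin m → Fin 4)) (k r : ℕ) (hk : k < L.length) (hr : r < m)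
    (h : k*m + r < ((L.map (fun v => List.ofFn v)).flatten).length) :
    ((L.map (fun v => List.ofFn v)).flatten)[k*m+r] = (L[k]) ⟨r, hr⟩ := by
  induction L generalizing k with
  | nil => simp at hk
  | cons v L ih =>
    cases k with
    | zero =>
      simp only [List.map_cons, List.flatten_cons]
      rw [List.getElem_append_left (by simpa using hr)]
      simp
    | succ k =>
      simp only [List.map_cons, List.flatten_cons]
      have hlen : (List.ofFn v).length = m := by simp
      have hge : (List.ofFn v).length ≤ (k+1)*m + r := by simp [hlen]; nlinarith
      rw [List.getElem_append_right hge]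
      have : (k+1)*m + r - (List.ofFn v).length = k*m + r := by simp [hlen]; ring_nf; omega
      simp only [this]
      have hk' : k < L.length := by simpa using hk
      rw [ih k hk']
      simp

lemma chain_const (l : List (Fin 4)) (hc : l.Chain' (· = ·)) :
    ∀ a b (ha : a < l.length) (hb : b < l.length), l[a] = l[b] := by
  have key : ∀ t (ht : t < l.length), l[t] = l[0]'(by omega) := by
    intro t ht
    induction t with
    | zero => rfl
    | succ t ih =>
      have := List.isChain_iff_getElem.mp hc t (by omega)
      simp -failIfUnchanged only [List.get_eq_getElem] at this
      rw [← this, ih (by omega)]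
  intro a b ha hb
  rw [key a ha, key b hb]

/-- A sequence over `Fin 4` has maximum run-length at most `m` if every
constant infix has length at most `m`. -/
def maxRunAtMost (m : ℕ) (s : List (Fin 4)) : Prop :=
  ∀ l : List (Fin 4), l <:+: s → l.Chain' (· = ·) → l.length ≤ m

theorem stmt_0 (m i : ℕ) (hm : 1 ≤ m) (hi1 : 1 ≤ i) (hi2 : i < m)
    (Xi : Set (Fin m → Fin 4))
    (hXi : Xi = {x : Fin m → Fin 4 | x ⟨i - 1, by omega⟩ ≠ x ⟨i, hi2⟩})
    (L : List (Fin m → Fin 4)) (hL : ∀ v ∈ L, v ∈ Xi) :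
    maxRunAtMost m (L.map (fun v => List.ofFn v)).flatten := by
  intro l hinf hc
  by_contra hlen
  push_neg at hlen
  obtain ⟨pre, suf, hs⟩ := hinf
  have hflen : ((L.map (fun v => List.ofFn v)).flatten).length = L.length * m :=
    flat_len m L
  set j := pre.length with hj
  have htot : j + l.length + suf.length = ((L.map (fun v => List.ofFn v)).flatten).length := by
    rw [← hs]; simp; ring
  set k := (j + m - i) / m with hk
  have hdm := Nat.div_add_mod (j + m - i) m
  rw [← hk] at hdm
  have hmk : m * k = k * m := Nat.mul_comm m k
  have hmod := Nat.mod_lt (j + m - i) (show 0 < m by omega)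
  have hk1 : k * m + i ≤ j + m := by omega
  have hk2 : j + 1 ≤ k * m + i := by omega
  have hkL : k < L.length := by
    by_contra hkk
    push_neg at hkk
    have : L.length * m ≤ k * m := Nat.mul_le_mul_right m hkk
    omega
  have ht2 : k * m + i - j < l.length := by omega
  have ht1 : k * m + (i-1) - j < l.length := by omega
  have hget : ∀ t (ht : t < l.length),
      ((L.map (fun v => List.ofFn v)).flatten)[j + t]'(by omega) = l[t] := by
    intro t ht
    have h0 : j + t < (pre ++ l).length := by simp; omega
    rw [List.getElem_of_eq hs.symm, List.getElem_append_left h0,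
        List.getElem_append_right (show pre.length ≤ j + t by omega)]
    congr 1
    omega
  have heq : ((L.map (fun v => List.ofFn v)).flatten)[k*m + (i-1)]'(by omega)
      = ((L.map (fun v => List.ofFn v)).flatten)[k*m + i]'(by omega) := by
    have e1 := hget _ ht1
    have e2 := hget _ ht2
    have e3 := chain_const l hc _ _ ht1 ht2
    rw [← e1, ← e2] at e3
    have h1 : j + (k*m + (i-1) - j) = k*m + (i-1) := by omega
    have h2 : j + (k*m + i - j) = k*m + i := by omega
    simp_rw [h1, h2] at e3
    exact e3
  rw [flat_get m L k (i-1) hkL (by omega) (by omega),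
      flat_get m L k i hkL (by omega) (by omega)] at heq
  have hmem := hL (L[k]) (List.getElem_mem hkL)
  rw [hXi] at hmem
  exact hmem heq
end

section
/- For every m ≥ 2, there exists a set V of at least 3·4^{m-1} vectors in {0,1,2,3}^m such that any finite concatenation of vectors from V has run-length at most m. -/
lemma const_mem {α : Type*} {l : List α} (h : l.Chain' (· = ·)) :
    ∀ x ∈ l, ∀ y ∈ l, x = y := by
  induction l with
  | nil => simp
  | cons a t ih =>
    cases t with
    | nil => simp
    | cons b t' =>
      simp only [List.Chain', List.isChain_cons_cons] at h
      obtain ⟨hab, h2⟩ := h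
      have hall := ih h2
      have ha : ∀ z ∈ a :: b :: t', z = a := by
        intro z hz
        rcases List.mem_cons.1 hz with rfl | hz
        · rfl
        · rw [hab]; exact hall z hz b (by simp)
      intro x hx y hy
      rw [ha x hx, ha y hy]

lemma infix_append_cases {α : Type*} {l a b : List α} (h : l <:+: a ++ b) :
    l <:+: a ∨ l <:+: b ∨
    ∃ a₁ b₁, a₁ ≠ [] ∧ b₁ ≠ [] ∧ l = a₁ ++ b₁ ∧ a₁ <:+ a ∧ b₁ <+: b := by
  obtain ⟨t, u, htu⟩ := h
  have htu' : t ++ (l ++ u) = a ++ b := by rw [← List.append_assoc, htu]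
  by_cases hk : a.length ≤ t.length
  · right; left
    have ha : a <+: t :=
      List.prefix_of_prefix_length_le ⟨b, rfl⟩ (⟨l ++ u, htu'⟩) hk
    obtain ⟨t', rfl⟩ := ha
    refine ⟨t', u, ?_⟩
    have h1 : a ++ (t' ++ (l ++ u)) = a ++ b := by
      rw [← List.append_assoc, htu']
    have h2 := List.append_cancel_left h1
    rw [← h2]; simp
  · push_neg at hk
    set d := a.drop t.length with hd
    have hdlen : d.length = a.length - t.length := by simp [hd]
    have hdpos : 0 < d.length := by omega
    have hdrop : l ++ u = d ++ b := by
      have h3 := congrArg (List.drop t.length) htu'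
      rwa [List.drop_left, List.drop_append_of_le_length (le_of_lt hk), ← hd] at h3
    by_cases hl : l.length ≤ d.length
    · left
      have hld : l <+: d :=
        List.prefix_of_prefix_length_le ⟨u, hdrop⟩ ⟨b, rfl⟩ hl
      exact hld.isInfix.trans (List.drop_suffix _ _).isInfix
    · right; right
      push_neg at hl
      have hdl : d <+: l :=
        List.prefix_of_prefix_length_le ⟨b, rfl⟩ ⟨u, hdrop⟩ (le_of_lt hl)
      obtain ⟨b₁, rfl⟩ := hdl
      refine ⟨d, b₁, ?_, ?_, rfl, List.drop_suffix _ _, ?_⟩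
      · intro hnil; rw [hnil] at hdpos; simp at hdpos
      · intro hnil; rw [hnil] at hl; simp at hl
      · have h4 : d ++ (b₁ ++ u) = d ++ b := by rw [← List.append_assoc, hdrop]
        exact ⟨u, List.append_cancel_left h4⟩

lemma suffix_const {m : ℕ} (hm : 2 ≤ m) (v : Fin m → Fin 4) {a : List (Fin 4)}
    (ha : a <:+ List.ofFn v) (hc : a.Chain' (· = ·)) (hlen : 2 ≤ a.length) :
    v ⟨m - 2, by omega⟩ = v ⟨m - 1, by omega⟩ := by
  obtain ⟨t, ht⟩ := ha
  have hlt : t.length + a.length = m := by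
    have h0 := congrArg List.length ht
    simpa using h0
  have key : ∀ i : ℕ, (h1 : i < m) → t.length ≤ i → v ⟨i, h1⟩ ∈ a := by
    intro i h1 h2
    have hia : i - t.length < a.length := by omega
    have hi2 : i < (t ++ a).length := by simp; omega
    have e1 : (t ++ a)[i]'hi2 = a[i - t.length]'hia :=
      List.getElem_append_right h2
    have e2 : (t ++ a)[i]'hi2 = v ⟨i, h1⟩ := by
      simp only [ht, List.getElem_ofFn]
    rw [← e2, e1]
    exact List.getElem_mem _
  exact const_mem hc _ (key (m - 2) (by omega) (by omega)) _
    (key (m - 1) (by omega) (by omega))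

lemma key_lemma (m : ℕ) (hm : 2 ≤ m) (L : List (Fin m → Fin 4))
    (hL : ∀ v ∈ L, v ⟨m - 2, by omega⟩ ≠ v ⟨m - 1, by omega⟩) :
    (∀ l : List (Fin 4), l <:+: (L.map (fun v => List.ofFn v)).flatten →
        l.Chain' (· = ·) → l.length ≤ m) ∧
    (∀ l : List (Fin 4), l <+: (L.map (fun v => List.ofFn v)).flatten →
        l.Chain' (· = ·) → l.length ≤ m - 1) := by
  induction L with
  | nil =>
    constructor <;> intro l hl _
    · simp only [List.map_nil, List.flatten_nil] at hl
      rw [List.infix_nil] at hl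
      simp [hl]
    · simp only [List.map_nil, List.flatten_nil] at hl
      rw [List.prefix_nil] at hl
      simp [hl]
  | cons v L ih =>
    have hv := hL v List.mem_cons_self
    have ih' := ih (fun w hw => hL w (List.mem_cons_of_mem _ hw))
    simp only [List.map_cons, List.flatten_cons]
    set s' := (L.map (fun v => List.ofFn v)).flatten with hs'
    have hpre : ∀ l : List (Fin 4), l <+: List.ofFn v ++ s' →
        l.Chain' (· = ·) → l.length ≤ m - 1 := by
      intro l hl hc
      by_contra hlen
      push_neg at hlen
      have hov : List.ofFn v <+: l :=
        List.prefix_of_prefix_length_le (List.prefix_append _ _) hl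
          (by rw [List.length_ofFn]; omega)
      have hcv : (List.ofFn v).Chain' (· = ·) := hc.sublist hov.sublist
      exact hv (const_mem hcv _ ((List.mem_ofFn).2 ⟨_, rfl⟩)
        _ ((List.mem_ofFn).2 ⟨_, rfl⟩))
    refine ⟨?_, hpre⟩
    intro l hl hc
    rcases infix_append_cases hl with h | h | ⟨a₁, b₁, ha₁, hb₁, rfl, hsuf, hpref⟩
    · have h5 := h.length_le
      simpa using h5
    · exact ih'.1 l h hc
    · simp only [List.Chain', List.isChain_append] at hc
      have hlb : b₁.length ≤ m - 1 := ih'.2 b₁ hpref hc.2.1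
      have hla : a₁.length ≤ 1 := by
        by_contra hcon
        push_neg at hcon
        exact hv (suffix_const hm v hsuf hc.1 (by omega))
      simp only [List.length_append]
      omega

theorem stmt_2 (m : ℕ) (hm : 2 ≤ m) :
    ∃ V : Set (Fin m → Fin 4),
      3 * 4 ^ (m - 1) ≤ Nat.card V ∧
      ∀ L : List (Fin m → Fin 4), (∀ v ∈ L, v ∈ V) →
        maxRunAtMost m (L.map (fun v => List.ofFn v)).flatten := by
  refine ⟨{v | v ⟨m - 2, by omega⟩ ≠ v ⟨m - 1, by omega⟩}, ?_, ?_⟩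
  · have hcard : Nat.card (Fin 3 × (Fin (m - 1) → Fin 4)) = 3 * 4 ^ (m - 1) := by
      simp [Nat.card_eq_fintype_card]
    set g : Fin 3 × (Fin (m - 1) → Fin 4) → (Fin m → Fin 4) :=
      fun p i => if h : (i : ℕ) < m - 1 then p.2 ⟨i, h⟩
        else p.2 ⟨m - 2, by omega⟩ + p.1.succ with hg
    have hmem : ∀ p, g p ∈ {v : Fin m → Fin 4 | v ⟨m - 2, by omega⟩ ≠ v ⟨m - 1, by omega⟩} := by
      intro p
      simp only [Set.mem_setOf_eq, hg]
      rw [dif_pos (show m - 2 < m - 1 by omega), dif_neg (show ¬ (m - 1 < m - 1) by omega)]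
      intro hbad
      exact Fin.succ_ne_zero p.1 (left_eq_add.1 hbad)
    have hinj : Function.Injective g := by
      intro p q hpq
      have h2 : p.2 = q.2 := by
        funext j
        have h3 := congrFun hpq ⟨j, by omega⟩
        simp only [hg] at h3
        rw [dif_pos (show ((⟨(j : ℕ), by omega⟩ : Fin m) : ℕ) < m - 1 from j.isLt)] at h3
        simpa using h3
      have h1 : p.1 = q.1 := by
        have h3 := congrFun hpq ⟨m - 1, by omega⟩
        simp only [hg] at h3
        rw [dif_neg (show ¬ ((⟨m - 1, by omega⟩ : Fin m) : ℕ) < m - 1 by simp),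
          dif_neg (show ¬ ((⟨m - 1, by omega⟩ : Fin m) : ℕ) < m - 1 by simp)] at h3
        rw [h2] at h3
        exact Fin.succ_injective _ (add_left_cancel h3)
      exact Prod.ext h1 h2
    calc 3 * 4 ^ (m - 1) = Nat.card (Fin 3 × (Fin (m - 1) → Fin 4)) := hcard.symm
      _ ≤ _ := Nat.card_le_card_of_injective
          (fun p => (⟨g p, hmem p⟩ : {v : Fin m → Fin 4 | v ⟨m - 2, by omega⟩ ≠ v ⟨m - 1, by omega⟩}))
          (fun p q h => hinj (congrArg Subtype.val h))
  · intro L hLV l hl hc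
    exact (key_lemma m hm L hLV).1 l hl hc
end
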